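/- Let α, β, α_1, α_2, β_1, β_2 be finite multisets of positive integers with α_1·α_2 = β_1·β_2 (as multisets of pairwise products), and let A, B be multisets of nonnegative integers containing 0 exactly once with finite multiplicities. If αA = βB (as multisets), then (α·α_2)(α_1 A) = (β·β_2)(β_1 B) as multisets. -/

import Mathlib

noncomputable def subps (c : ℕ) (f : PowerSeries ℕ) : PowerSeries ℕ :=
  PowerSeries.mk fun n => if c ∣ n then PowerSeries.coeff (n / c) f else 0

lemma coeff_subps (c n : ℕ) (f : PowerSeries ℕ) :
    PowerSeries.coeff n (subps c f) =
      if c ∣ n then PowerSeries.coeff (n / c) f else 0 := by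
  simp [subps]

lemma subps_one {c : ℕ} (hc : 0 < c) : subps c 1 = 1 := by
  ext n
  rcases eq_or_ne n 0 with rfl | hn
  · simp [coeff_subps]
  · have h1 : (PowerSeries.coeff n) (1 : PowerSeries ℕ) = 0 := by
      simp [PowerSeries.coeff_one, hn]
    rw [coeff_subps, h1]
    split_ifs with hd
    · obtain ⟨k, rfl⟩ := hd
      have hk : k ≠ 0 := by rintro rfl; simp at hn
      rw [Nat.mul_div_cancel_left _ hc]
      simp [PowerSeries.coeff_one, hk]
    · rfl

lemma subps_mul {c : ℕ} (hc : 0 < c) (f g : PowerSeries ℕ) :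
    subps c (f * g) = subps c f * subps c g := by
  ext n
  rw [PowerSeries.coeff_mul, coeff_subps]
  have hterm : ∀ p : ℕ × ℕ,
      PowerSeries.coeff p.1 (subps c f) * PowerSeries.coeff p.2 (subps c g) =
        if c ∣ p.1 ∧ c ∣ p.2 then
          PowerSeries.coeff (p.1 / c) f * PowerSeries.coeff (p.2 / c) g else 0 := by
    intro p; rw [coeff_subps, coeff_subps, ite_zero_mul_ite_zero]
  simp only [hterm]
  rw [← Finset.sum_filter]
  split_ifs with hcn
  · rw [PowerSeries.coeff_mul]
    refine Finset.sum_nbij' (fun q => (c * q.1, c * q.2)) (fun p => (p.1 / c, p.2 / c))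
      ?_ ?_ ?_ ?_ ?_
    · rintro ⟨q1, q2⟩ hq
      simp only [Finset.mem_filter, Finset.HasAntidiagonal.mem_antidiagonal] at hq ⊢
      obtain ⟨m, hm⟩ := hcn
      refine ⟨?_, ⟨q1, rfl⟩, ⟨q2, rfl⟩⟩
      rw [hm] at hq ⊢
      rw [Nat.mul_div_cancel_left _ hc] at hq
      rw [← Nat.mul_add, hq]
    · rintro ⟨p1, p2⟩ hp
      simp only [Finset.mem_filter, Finset.HasAntidiagonal.mem_antidiagonal] at hp ⊢
      obtain ⟨hsum, h1, h2⟩ := hp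
      obtain ⟨k1, rfl⟩ := h1; obtain ⟨k2, rfl⟩ := h2
      rw [Nat.mul_div_cancel_left _ hc, Nat.mul_div_cancel_left _ hc]
      obtain ⟨m, hm⟩ := hcn
      rw [hm] at hsum ⊢
      rw [Nat.mul_div_cancel_left _ hc]
      exact Nat.eq_of_mul_eq_mul_left hc (by rw [Nat.mul_add]; exact hsum)
    · rintro ⟨q1, q2⟩ _
      simp [Nat.mul_div_cancel_left _ hc]
    · rintro ⟨p1, p2⟩ hp
      simp only [Finset.mem_filter, Finset.HasAntidiagonal.mem_antidiagonal] at hp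
      obtain ⟨hsum, h1, h2⟩ := hp
      obtain ⟨k1, rfl⟩ := h1; obtain ⟨k2, rfl⟩ := h2
      simp [Nat.mul_div_cancel_left _ hc]
    · rintro ⟨q1, q2⟩ _
      simp [Nat.mul_div_cancel_left _ hc]
  · refine (Finset.sum_eq_zero ?_).symm
    rintro ⟨p1, p2⟩ hp
    simp only [Finset.mem_filter, Finset.HasAntidiagonal.mem_antidiagonal] at hp
    exact absurd (hp.1 ▸ Nat.dvd_add hp.2.1 hp.2.2) hcn

lemma subps_prod {c : ℕ} (hc : 0 < c) {ι : Type} (s : Finset ι) (f : ι → PowerSeries ℕ) :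
    subps c (∏ i ∈ s, f i) = ∏ i ∈ s, subps c (f i) := by
  classical
  induction s using Finset.induction with
  | empty => simpa using subps_one hc
  | insert _ _ hx ih => rw [Finset.prod_insert hx, Finset.prod_insert hx, subps_mul hc, ih]

lemma subps_subps {c d : ℕ} (hc : 0 < c) (hd : 0 < d) (f : PowerSeries ℕ) :
    subps c (subps d f) = subps (c * d) f := by
  ext n
  simp only [coeff_subps]
  by_cases h : c * d ∣ n
  · obtain ⟨k, rfl⟩ := h
    have h1 : c * d * k / c = d * k := by rw [mul_assoc, Nat.mul_div_cancel_left _ hc]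
    have d1 : c ∣ c * d * k := ⟨d * k, by ring⟩
    have d2 : d ∣ c * d * k / c := by rw [h1]; exact ⟨k, rfl⟩
    have d3 : c * d ∣ c * d * k := ⟨k, rfl⟩
    simp [d1, d2, d3, Nat.div_div_eq_div_mul]
  · rw [if_neg h]
    split_ifs with h1 h2
    · obtain ⟨k, rfl⟩ := h1
      rw [Nat.mul_div_cancel_left _ hc] at h2
      obtain ⟨m, rfl⟩ := h2
      exact absurd ⟨m, by ring⟩ h
    · rfl
    · rfl

/-- Representation function for a multiset of nonnegative integers given by its
multiplicity function `χ` and a coefficient vector `a` of positive integers: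
`Rm χ a n` counts indexed tuples (choices of elements of the multiset, respecting
multiplicity) with `∑ a i * c_{j i} = n`. -/
def Rm (χ : ℕ → ℕ) {ι : Type} [Fintype ι] [DecidableEq ι] (a : ι → ℕ) (n : ℕ) : ℕ :=
  ∑ v : ι → Fin (n + 1), if (∑ i, a i * (v i : ℕ)) = n then ∏ i, χ (v i) else 0

lemma Rm_eq_coeff {ι : Type} [Fintype ι] [DecidableEq ι] (χ : ℕ → ℕ) (a : ι → ℕ)
    (ha : ∀ i, 0 < a i) (n : ℕ) :
    Rm χ a n = PowerSeries.coeff n (∏ i, subps (a i) (PowerSeries.mk χ)) := by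
  classical
  rw [PowerSeries.coeff_prod]
  have hterm : ∀ l : ι →₀ ℕ,
      (∏ i, PowerSeries.coeff (l i) (subps (a i) (PowerSeries.mk χ)))
        = if ∀ i, a i ∣ l i then ∏ i, χ (l i / a i) else 0 := by
    intro l
    rw [← Fintype.prod_ite_zero]
    exact Finset.prod_congr rfl fun i _ => by rw [coeff_subps, PowerSeries.coeff_mk]
  simp only [hterm]
  rw [← Finset.sum_filter]
  unfold Rm
  rw [← Finset.sum_filter]
  have hln : ∀ l ∈ (Finset.univ.finsuppAntidiag n).filter (fun l : ι →₀ ℕ => ∀ i, a i ∣ l i),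
      ∀ i, l i ≤ n := by
    intro l hl i
    simp only [Finset.mem_filter, Finset.mem_finsuppAntidiag] at hl
    calc l i ≤ ∑ j, l j := Finset.single_le_sum (fun j _ => Nat.zero_le _) (Finset.mem_univ i)
    _ = n := hl.1.1
  refine Finset.sum_nbij'
    (fun v => Finsupp.equivFunOnFinite.symm (fun i => a i * (v i : ℕ)))
    (fun l => fun i => (⟨min (l i / a i) n, by omega⟩ : Fin (n + 1)))
    ?_ ?_ ?_ ?_ ?_
  · intro v hv
    simp only [Finset.mem_filter, Finset.mem_finsuppAntidiag] at hv ⊢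
    refine ⟨⟨?_, Finset.subset_univ _⟩, fun i => ?_⟩
    · simpa using hv
    · simpa using dvd_mul_right (a i) (v i : ℕ)
  · intro l hl
    have hle := hln l hl
    simp only [Finset.mem_filter, Finset.mem_finsuppAntidiag] at hl ⊢
    refine ⟨Finset.mem_univ _, ?_⟩
    have : ∀ i, a i * ((⟨min (l i / a i) n, by omega⟩ : Fin (n + 1)) : ℕ) = l i := by
      intro i
      have h1 : l i / a i ≤ n := le_trans (Nat.div_le_self _ _) (hle i)
      simp only [min_eq_left h1]
      exact Nat.mul_div_cancel' (hl.2 i)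
    rw [Finset.sum_congr rfl fun i _ => this i]
    exact hl.1.1
  · intro v hv
    funext i
    have h1 : a i * (v i : ℕ) / a i = (v i : ℕ) := Nat.mul_div_cancel_left _ (ha i)
    have h2 : (v i : ℕ) ≤ n := Nat.lt_succ_iff.mp (v i).isLt
    simp [h1, min_eq_left h2]
  · intro l hl
    have hle := hln l hl
    simp only [Finset.mem_filter, Finset.mem_finsuppAntidiag] at hl
    ext i
    have h1 : l i / a i ≤ n := le_trans (Nat.div_le_self _ _) (hle i)
    simp only [Finsupp.coe_equivFunOnFinite_symm, min_eq_left h1]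
    exact Nat.mul_div_cancel' (hl.2 i)
  · intro v hv
    refine Finset.prod_congr rfl fun i _ => ?_
    rw [Finsupp.coe_equivFunOnFinite_symm, Nat.mul_div_cancel_left _ (ha i)]

lemma mk_Rm {ι : Type} [Fintype ι] [DecidableEq ι] (χ : ℕ → ℕ) (a : ι → ℕ)
    (ha : ∀ i, 0 < a i) :
    PowerSeries.mk (fun m => Rm χ a m) = ∏ i, subps (a i) (PowerSeries.mk χ) :=
  PowerSeries.ext fun n => by rw [PowerSeries.coeff_mk]; exact Rm_eq_coeff χ a ha n

lemma triple_swap {M : Type*} [CommMonoid M] {α β γ : Type} [Fintype α] [Fintype β] [Fintype γ]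
    (f : α → β → γ → M) :
    ∏ x : α, ∏ y : β, ∏ z : γ, f x y z = ∏ z : γ, ∏ y : β, ∏ x : α, f x y z :=
  calc ∏ x : α, ∏ y : β, ∏ z : γ, f x y z
      = ∏ y : β, ∏ x : α, ∏ z : γ, f x y z := Finset.prod_comm
    _ = ∏ y : β, ∏ z : γ, ∏ x : α, f x y z :=
        Finset.prod_congr rfl fun _ _ => Finset.prod_comm
    _ = ∏ z : γ, ∏ y : β, ∏ x : α, f x y z := Finset.prod_comm

lemma prod_of_count {ι κ : Type} [Fintype ι] [Fintype κ] [DecidableEq ι] [DecidableEq κ]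
    (u : ι → ℕ) (w : κ → ℕ)
    (hc : ∀ k, (Finset.univ.filter fun i => u i = k).card
      = (Finset.univ.filter fun j => w j = k).card)
    (g : ℕ → PowerSeries ℕ) : ∏ i, g (u i) = ∏ j, g (w j) := by
  have key : ∀ {σ : Type} [Fintype σ] [DecidableEq σ] (u : σ → ℕ) (k : ℕ),
      Multiset.count k (Multiset.map u Finset.univ.val)
        = (Finset.univ.filter fun i => u i = k).card := by
    intro σ _ _ u k
    rw [Multiset.count_map, Finset.card_def, Finset.filter_val]
    congr 1
    refine Multiset.filter_congr fun a _ => ?_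
    exact eq_comm
  have hm : Multiset.map u Finset.univ.val = Multiset.map w Finset.univ.val :=
    Multiset.ext.mpr fun k => by rw [key, key, hc]
  calc ∏ i, g (u i) = ((Finset.univ.val.map u).map g).prod := by
        rw [Multiset.map_map]; exact Finset.prod_eq_multiset_prod _ _
    _ = ((Finset.univ.val.map w).map g).prod := by rw [hm]
    _ = ∏ j, g (w j) := by
        rw [Multiset.map_map]; exact (Finset.prod_eq_multiset_prod _ _).symm

lemma expand_Rm {σ σ1 σ2 : Type} [Fintype σ] [Fintype σ1] [Fintype σ2]
    [DecidableEq σ] [DecidableEq σ1] [DecidableEq σ2]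
    (χ : ℕ → ℕ) (c : σ → ℕ) (c1 : σ1 → ℕ) (c2 : σ2 → ℕ)
    (hc : ∀ i, 0 < c i) (hc1 : ∀ i, 0 < c1 i) (hc2 : ∀ i, 0 < c2 i) (n : ℕ) :
    Rm (fun m => Rm χ c1 m) (fun p : σ × σ2 => c p.1 * c2 p.2) n
      = PowerSeries.coeff n (∏ q : σ1 × σ2, subps (c1 q.1 * c2 q.2)
          (∏ j, subps (c j) (PowerSeries.mk χ))) := by
  rw [Rm_eq_coeff (fun m => Rm χ c1 m) (fun p : σ × σ2 => c p.1 * c2 p.2) (fun p => Nat.mul_pos (hc p.1) (hc2 p.2)) n]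
  congr 1
  calc ∏ p : σ × σ2, subps (c p.1 * c2 p.2) (PowerSeries.mk fun m => Rm χ c1 m)
      = ∏ p : σ × σ2, ∏ i : σ1, subps (c p.1 * c2 p.2 * c1 i) (PowerSeries.mk χ) := by
        refine Finset.prod_congr rfl fun p _ => ?_
        rw [mk_Rm _ _ hc1, subps_prod (Nat.mul_pos (hc p.1) (hc2 p.2))]
        exact Finset.prod_congr rfl fun i _ =>
          subps_subps (Nat.mul_pos (hc p.1) (hc2 p.2)) (hc1 i) _
    _ = ∏ j : σ, ∏ k : σ2, ∏ i : σ1, subps (c j * c2 k * c1 i) (PowerSeries.mk χ) :=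
        Fintype.prod_prod_type _
    _ = ∏ i : σ1, ∏ k : σ2, ∏ j : σ, subps (c j * c2 k * c1 i) (PowerSeries.mk χ) :=
        triple_swap _
    _ = ∏ q : σ1 × σ2, ∏ j : σ, subps (c j * c2 q.2 * c1 q.1) (PowerSeries.mk χ) :=
        (Fintype.prod_prod_type' _).symm
    _ = ∏ q : σ1 × σ2, subps (c1 q.1 * c2 q.2) (∏ j, subps (c j) (PowerSeries.mk χ)) := by
        refine Finset.prod_congr rfl fun q _ => ?_
        rw [subps_prod (Nat.mul_pos (hc1 q.1) (hc2 q.2))]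
        refine Finset.prod_congr rfl fun j _ => ?_
        rw [subps_subps (Nat.mul_pos (hc1 q.1) (hc2 q.2)) (hc j)]
        congr 1
        ring

theorem stmt_11 {s t s1 s2 t1 t2 : ℕ}
    (a : Fin s → ℕ) (b : Fin t → ℕ)
    (a1 : Fin s1 → ℕ) (a2 : Fin s2 → ℕ) (b1 : Fin t1 → ℕ) (b2 : Fin t2 → ℕ)
    (ha : ∀ i, 0 < a i) (hb : ∀ i, 0 < b i)
    (ha1 : ∀ i, 0 < a1 i) (ha2 : ∀ i, 0 < a2 i)
    (hb1 : ∀ i, 0 < b1 i) (hb2 : ∀ i, 0 < b2 i)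
    (hprod : ∀ k : ℕ,
      (Finset.univ.filter fun p : Fin s1 × Fin s2 => a1 p.1 * a2 p.2 = k).card =
        (Finset.univ.filter fun p : Fin t1 × Fin t2 => b1 p.1 * b2 p.2 = k).card)
    (χA χB : ℕ → ℕ) (hA0 : χA 0 = 1) (hB0 : χB 0 = 1)
    (h : ∀ n : ℕ, Rm χA a n = Rm χB b n) :
    ∀ n : ℕ,
      Rm (fun m => Rm χA a1 m) (fun p : Fin s × Fin s2 => a p.1 * a2 p.2) n =
        Rm (fun m => Rm χB b1 m) (fun p : Fin t × Fin t2 => b p.1 * b2 p.2) n := by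
  intro n
  have hPQ : ∏ j, subps (a j) (PowerSeries.mk χA) = ∏ j, subps (b j) (PowerSeries.mk χB) := by
    rw [← mk_Rm χA a ha, ← mk_Rm χB b hb]
    exact PowerSeries.ext fun m => by
      rw [PowerSeries.coeff_mk, PowerSeries.coeff_mk]; exact h m
  rw [expand_Rm χA a a1 a2 ha ha1 ha2 n, expand_Rm χB b b1 b2 hb hb1 hb2 n, hPQ]
  congr 1
  exact prod_of_count (fun q : Fin s1 × Fin s2 => a1 q.1 * a2 q.2)
    (fun q : Fin t1 × Fin t2 => b1 q.1 * b2 q.2) hprod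
    (fun k => subps k (∏ j, subps (b j) (PowerSeries.mk χB)))
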